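/- Let Γ be a finite group acting on L ≅ ℤ^ℓ via an injective ρ : Γ → GL(L). Then for each irreducible character χ_i of Γ, the quasi-polynomial m(χ_i; q) has degree ℓ with leading coefficient χ_i(1)/#Γ; that is, m(χ_i; q) = (χ_i(1)/#Γ) q^ℓ + (lower order terms in q). -/

import Mathlib

/-- Number of fixed points of the matrix `M` acting on row vectors of `(ℤ/qℤ)^ℓ`. -/
noncomputable def fixCard {ℓ : ℕ} (M : Matrix (Fin ℓ) (Fin ℓ) ℤ) (q : ℕ) : ℕ :=
  Nat.card {x : Fin ℓ → ZMod q // Matrix.vecMul x (M.map (Int.cast : ℤ → ZMod q)) = x}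

lemma torsion_card (q m : ℕ) (hq : 0 < q) :
    Nat.card {y : ZMod q // (m : ZMod q) * y = 0} = Nat.gcd m q := by
  haveI : NeZero q := ⟨hq.ne'⟩
  set f : ZMod q →+ ZMod q := AddMonoidHom.mulLeft (m : ZMod q) with hf
  have h1 : Nat.card {y : ZMod q // (m : ZMod q) * y = 0} = Nat.card f.ker :=
    Nat.card_congr (Equiv.subtypeEquivRight fun y => by
      simp [f, AddMonoidHom.mem_ker, AddMonoidHom.mulLeft])
  have hrange : f.range = AddSubgroup.zmultiples ((m : ZMod q)) := by
    ext y
    constructor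
    · rintro ⟨x, rfl⟩
      obtain ⟨k, rfl⟩ := ZMod.intCast_surjective x
      exact ⟨k, by simp [f, AddMonoidHom.mulLeft, zsmul_eq_mul, mul_comm]⟩
    · rintro ⟨k, rfl⟩
      exact ⟨(k : ZMod q), by simp [f, AddMonoidHom.mulLeft, zsmul_eq_mul, mul_comm]⟩
  have hcard : Nat.card (ZMod q) = Nat.card (ZMod q ⧸ f.ker) * Nat.card f.ker :=
    AddSubgroup.card_eq_card_quotient_mul_card_addSubgroup f.ker
  have hquot : Nat.card (ZMod q ⧸ f.ker) = q / Nat.gcd q m := by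
    rw [Nat.card_congr (QuotientAddGroup.quotientKerEquivRange f).toEquiv, hrange,
      Nat.card_zmultiples, ZMod.addOrderOf_coe m hq.ne']
  rw [Nat.card_zmod, hquot] at hcard
  have hd : Nat.gcd q m ∣ q := Nat.gcd_dvd_left q m
  have hpos : 0 < q / Nat.gcd q m :=
    Nat.div_pos (Nat.le_of_dvd hq hd) (Nat.gcd_pos_of_pos_left m hq)
  have : q / Nat.gcd q m * Nat.gcd q m = q := Nat.div_mul_cancel hd
  rw [h1, Nat.gcd_comm]
  exact (Nat.eq_of_mul_eq_mul_left hpos (by rw [← hcard, this])).symm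

open Matrix in
lemma ker_card (ℓ : ℕ) (A : Matrix (Fin ℓ) (Fin ℓ) ℤ) :
    ∃ k : ℕ, k ≤ ℓ ∧ (A = 0 ↔ k = 0) ∧ ∃ a : Fin k → ℕ, (∀ i, 0 < a i) ∧
      ∀ q : ℕ, 0 < q →
        Nat.card {x : Fin ℓ → ZMod q // Matrix.vecMul x (A.map (Int.cast : ℤ → ZMod q)) = 0}
          = q ^ (ℓ - k) * ∏ i, Nat.gcd (a i) q := by
  classical
  set W : Submodule ℤ (Fin ℓ → ℤ) := LinearMap.range A.mulVecLin with hWdef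
  obtain ⟨k, snf⟩ := W.smithNormalForm (Pi.basisFun ℤ (Fin ℓ))
  have hab : ∀ i, snf.a i ≠ 0 := by
    intro i hai
    have h0 := snf.snf i
    rw [hai, zero_smul] at h0
    exact snf.bN.ne_zero i (Submodule.coe_eq_zero.mp h0)
  refine ⟨k, ?_, ?_, fun i => (snf.a i).natAbs, fun i => Int.natAbs_pos.mpr (hab i), ?_⟩
  · simpa using Fintype.card_le_of_embedding snf.f
  · constructor
    · intro h
      by_contra hk
      have hbot : W = ⊥ := by rw [hWdef, h]; simp
      haveI : Subsingleton W := by rw [hbot]; infer_instance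
      exact snf.bN.ne_zero ⟨0, Nat.pos_of_ne_zero hk⟩ (Subsingleton.elim _ _)
    · intro h
      haveI : IsEmpty (Fin k) := by rw [h]; infer_instance
      haveI : Subsingleton W := Equiv.subsingleton snf.bN.repr.toEquiv
      have hbot : W = ⊥ := Submodule.eq_bot_of_subsingleton
      have h0 : A.mulVecLin = 0 := LinearMap.range_eq_bot.mp hbot
      ext i j
      have := congrFun (congrArg DFunLike.coe h0) (Pi.single j 1)
      rw [Matrix.mulVecLin_apply, Matrix.mulVec_single_one] at this
      simpa using congrFun this i
  · intro q hq
    haveI : NeZero q := ⟨hq.ne'⟩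
    set na : Fin k → ℕ := fun i => (snf.a i).natAbs with hna
    set e₁ : (Fin ℓ → ZMod q) ≃ₗ[ℤ] ((Fin ℓ → ℤ) →ₗ[ℤ] ZMod q) :=
      (Pi.basisFun ℤ (Fin ℓ)).constr ℤ with he₁
    set e₂ : (Fin ℓ → ZMod q) ≃ₗ[ℤ] ((Fin ℓ → ℤ) →ₗ[ℤ] ZMod q) := snf.bM.constr ℤ with he₂
    have hsmul : ∀ (i : Fin k) (z : ZMod q),
        (snf.a i • z = 0 ↔ ((na i : ℕ) : ZMod q) * z = 0) := by
      intro i z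
      rcases Int.natAbs_eq (snf.a i) with h | h
      · conv_lhs => rw [zsmul_eq_mul, h, Int.cast_natCast]
      · conv_lhs => rw [zsmul_eq_mul, h, Int.cast_neg, Int.cast_natCast, neg_mul]
        rw [neg_eq_zero]
    have key : ∀ x : Fin ℓ → ZMod q,
        Matrix.vecMul x (A.map (Int.cast : ℤ → ZMod q)) = 0 ↔
        ∀ i : Fin k, ((na i : ℕ) : ZMod q) * (e₂.symm (e₁ x)) (snf.f i) = 0 := by
      intro x
      set φ : (Fin ℓ → ℤ) →ₗ[ℤ] ZMod q := e₁ x with hφdef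
      have hφ : ∀ v : Fin ℓ → ℤ, φ v = ∑ i, v i • x i := by
        intro v
        rw [hφdef, he₁, Module.Basis.constr_apply_fintype]
        simp [Pi.basisFun_equivFun]
      have hc : ∀ j, (e₂.symm φ) j = φ (snf.bM j) := by
        intro j
        conv_lhs => rw [← snf.bM.constr_basis ℤ (e₂.symm φ) j]
        rw [← he₂, LinearEquiv.apply_symm_apply]
      have hcol : ∀ j, ∑ i, A i j • x i
          = Matrix.vecMul x (A.map (Int.cast : ℤ → ZMod q)) j := by
        intro j
        simp [Matrix.vecMul, dotProduct, Matrix.map_apply, zsmul_eq_mul, mul_comm]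
      have step1 : Matrix.vecMul x (A.map (Int.cast : ℤ → ZMod q)) = 0 ↔
          ∀ w ∈ W, φ w = 0 := by
        constructor
        · intro h w hw
          obtain ⟨y, rfl⟩ := hw
          rw [Matrix.mulVecLin_apply, hφ]
          have : ∀ i, (A *ᵥ y) i • x i = ∑ j, (A i j * y j) • x i := by
            intro i; rw [Matrix.mulVec, dotProduct, Finset.sum_smul]
          rw [Finset.sum_congr rfl fun i _ => this i, Finset.sum_comm]
          have : ∀ j i, (A i j * y j) • x i = y j • (A i j • x i) := by
            intro j i; rw [smul_smul, mul_comm]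
          simp only [this, ← Finset.smul_sum, hcol, h]
          simp
        · intro h
          funext j
          have h0 : φ (A.mulVecLin (Pi.single j 1)) = 0 := h _ ⟨_, rfl⟩
          rw [Matrix.mulVecLin_apply, Matrix.mulVec_single_one, hφ] at h0
          simp only [Matrix.col_apply] at h0
          rw [Pi.zero_apply, ← hcol j]
          exact h0
      have step2 : (∀ w ∈ W, φ w = 0) ↔
          ∀ i : Fin k, ((na i : ℕ) : ZMod q) * φ (snf.bM (snf.f i)) = 0 := by
        constructor
        · intro h i
          have h1 := h (snf.bN i) (snf.bN i).2
          rw [snf.snf i, LinearMap.map_smul] at h1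
          exact (hsmul i _).mp h1
        · intro h w hw
          have hrepr := snf.bN.sum_repr ⟨w, hw⟩
          have hcoe : w = ∑ i, snf.bN.repr ⟨w, hw⟩ i • (snf.bN i : Fin ℓ → ℤ) := by
            conv_lhs => rw [show w = ((⟨w, hw⟩ : W) : Fin ℓ → ℤ) from rfl, ← hrepr]
            push_cast
            rfl
          rw [hcoe, map_sum]
          refine Finset.sum_eq_zero fun i _ => ?_
          rw [snf.snf i, LinearMap.map_smul, LinearMap.map_smul,
            (hsmul i _).mpr (h i), smul_zero]
      rw [step1, step2]
      constructor
      · intro h i; rw [hc]; exact h i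
      · intro h i; rw [← hc]; exact h i
    have E : {x : Fin ℓ → ZMod q // Matrix.vecMul x (A.map (Int.cast : ℤ → ZMod q)) = 0} ≃
        {c : Fin ℓ → ZMod q // ∀ i : Fin k, ((na i : ℕ) : ZMod q) * c (snf.f i) = 0} :=
      Equiv.subtypeEquiv (e₁.toEquiv.trans e₂.symm.toEquiv) fun x => key x
    rw [Nat.card_congr E]
    set S : Fin ℓ → Set (ZMod q) :=
      fun j => {y | ∀ i, snf.f i = j → ((na i : ℕ) : ZMod q) * y = 0} with hS
    have E2 : {c : Fin ℓ → ZMod q // ∀ i : Fin k, ((na i : ℕ) : ZMod q) * c (snf.f i) = 0} ≃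
        ∀ j, S j :=
      ⟨fun c j => ⟨c.1 j, fun i h => h ▸ c.2 i⟩,
       fun s => ⟨fun j => (s j).1, fun i => (s (snf.f i)).2 i rfl⟩,
       fun c => rfl, fun s => rfl⟩
    rw [Nat.card_congr E2, Nat.card_pi]
    have hsplit := Finset.prod_mul_prod_compl (Finset.univ.image snf.f)
      (fun j => Nat.card (S j))
    rw [← hsplit]
    have himg : (∏ j ∈ Finset.univ.image snf.f, Nat.card (S j))
        = ∏ i : Fin k, Nat.gcd (na i) q := by
      rw [Finset.prod_image (fun i _ i' _ h => snf.f.injective h)]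
      refine Finset.prod_congr rfl fun i _ => ?_
      rw [← torsion_card q (na i) hq]
      apply Nat.card_congr
      exact Equiv.subtypeEquivRight fun y =>
        ⟨fun h => h i rfl, fun h i' hi' => by cases snf.f.injective hi'; exact h⟩
    have hcompl : (∏ j ∈ (Finset.univ.image snf.f)ᶜ, Nat.card (S j)) = q ^ (ℓ - k) := by
      have hq' : ∀ j ∈ (Finset.univ.image snf.f)ᶜ, Nat.card (S j) = q := by
        intro j hj
        rw [Finset.mem_compl] at hj
        have hj' : ∀ i, snf.f i ≠ j := by simpa using hj
        have : S j = Set.univ := by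
          ext y
          simp only [hS, Set.mem_setOf_eq, Set.mem_univ, iff_true]
          exact fun i h => absurd h (hj' i)
        rw [this, Nat.card_congr (Equiv.Set.univ _), Nat.card_zmod]
      rw [Finset.prod_congr rfl hq', Finset.prod_const, Finset.card_compl,
        Finset.card_image_of_injective Finset.univ snf.f.injective, Finset.card_univ,
        Fintype.card_fin, Fintype.card_fin]
    rw [himg, hcompl, mul_comm]


/-- For a finite group `Γ` acting on `ℤ^ℓ` via an injective
`ρ : Γ → GL_ℓ(ℤ)` and each irreducible character `χ_i` of `Γ`, the
quasi-polynomial `m(χ_i; q)` (multiplicity of `χ_i` in the permutation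
character on `(ℤ/qℤ)^ℓ`) has degree `ℓ` with leading coefficient
`χ_i(1)/#Γ`: all its constituents have degree `ℓ` and leading coefficient
`χ_i(1)/#Γ`. -/
theorem stmt8 (ℓ : ℕ) (Γ : Type) [Group Γ] [Fintype Γ]
    (ρ : Γ →* Matrix.GeneralLinearGroup (Fin ℓ) ℤ) (hρ : Function.Injective ρ)
    (V : FDRep ℂ Γ) (hV : CategoryTheory.Simple V) :
    ∃ n : ℕ, 0 < n ∧ ∃ g : ℕ → Polynomial ℂ,
      (∀ q : ℕ, 0 < q →
        (Fintype.card Γ : ℂ)⁻¹ * ∑ γ : Γ, V.character γ *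
            (starRingEnd ℂ) ((fixCard (ρ γ : Matrix (Fin ℓ) (Fin ℓ) ℤ) q : ℂ))
          = (g (q % n)).eval (q : ℂ))
      ∧ ∀ a : ℕ, a < n →
          (g a).natDegree = ℓ ∧
          (g a).coeff ℓ = V.character 1 / (Fintype.card Γ : ℂ) := by
  classical
  haveI := hV
  have hcard0 : (Fintype.card Γ : ℂ) ≠ 0 := Nat.cast_ne_zero.mpr Fintype.card_ne_zero
  -- the character does not vanish at 1
  have hχ1 : V.character 1 ≠ 0 := by
    intro h0
    rw [FDRep.char_one] at h0
    have hfr : Module.finrank ℂ V = 0 := by exact_mod_cast h0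
    haveI : Subsingleton V := Module.finrank_zero_iff.mp hfr
    have hzero : ∀ g : Γ, V.character g = 0 := by
      intro g
      show LinearMap.trace ℂ _ (V.ρ g) = 0
      rw [Subsingleton.elim (V.ρ g) 0, map_zero]
    haveI : Fintype Γ := ‹Fintype Γ›
    haveI : Nonempty Γ := ⟨1⟩
    haveI : Invertible ((Nat.card Γ) : ℂ) :=
      invertibleOfNonzero (Nat.cast_ne_zero.mpr Nat.card_pos.ne')
    have horth := FDRep.char_orthonormal (G := Γ) V V
    rw [if_pos ⟨CategoryTheory.Iso.refl V⟩] at horth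
    simp [hzero] at horth
  -- Smith normal form data for each group element
  choose k hkle hk0 a hapos hcount using
    fun γ : Γ => ker_card ℓ ((ρ γ : Matrix (Fin ℓ) (Fin ℓ) ℤ) - 1)
  have hfix : ∀ (γ : Γ) (q : ℕ), 0 < q →
      fixCard ((ρ γ : Matrix (Fin ℓ) (Fin ℓ) ℤ)) q
        = q ^ (ℓ - k γ) * ∏ i, Nat.gcd (a γ i) q := by
    intro γ q hq
    rw [← hcount γ q hq]
    unfold fixCard
    apply Nat.card_congr
    apply Equiv.subtypeEquivRight
    intro x
    have hmap : ((ρ γ : Matrix (Fin ℓ) (Fin ℓ) ℤ) - 1).map (Int.cast : ℤ → ZMod q)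
        = (ρ γ : Matrix (Fin ℓ) (Fin ℓ) ℤ).map (Int.cast : ℤ → ZMod q) - 1 := by
      rw [Matrix.map_sub _ (fun x y => by push_cast; ring),
        Matrix.map_one _ Int.cast_zero Int.cast_one]
    rw [hmap, Matrix.vecMul_sub, Matrix.vecMul_one, sub_eq_zero]
  have k1 : k 1 = 0 := (hk0 1).mp (by simp)
  have hkpos : ∀ γ : Γ, γ ≠ 1 → 0 < k γ := by
    intro γ hγ
    rcases Nat.eq_zero_or_pos (k γ) with h | h
    · exfalso
      have hA0 := (hk0 γ).mpr h
      have h1 : (ρ γ : Matrix (Fin ℓ) (Fin ℓ) ℤ) = 1 := by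
        have := sub_eq_zero.mp hA0; exact this
      have hργ : ρ γ = 1 := Units.ext h1
      exact hγ (hρ (by rw [hργ, map_one]))
    · exact h
  set n : ℕ := ∏ γ : Γ, ∏ i, a γ i with hn
  have hnpos : 0 < n :=
    Finset.prod_pos fun γ _ => Finset.prod_pos fun i _ => hapos γ i
  have hgcd : ∀ (γ : Γ) (i : Fin (k γ)) (Q : ℕ),
      Nat.gcd (a γ i) (Q % n) = Nat.gcd (a γ i) Q := by
    intro γ i Q
    have hd : a γ i ∣ n := by
      refine dvd_trans ?_ (Finset.dvd_prod_of_mem _ (Finset.mem_univ γ))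
      exact Finset.dvd_prod_of_mem _ (Finset.mem_univ i)
    rw [Nat.gcd_rec (a γ i) (Q % n), Nat.gcd_rec (a γ i) Q, Nat.mod_mod_of_dvd Q hd]
  set g : ℕ → Polynomial ℂ := fun b => Polynomial.C (Fintype.card Γ : ℂ)⁻¹ *
    ∑ γ : Γ, Polynomial.C (V.character γ * ((∏ i, Nat.gcd (a γ i) b : ℕ) : ℂ)) *
      Polynomial.X ^ (ℓ - k γ) with hg
  have hcoeff : ∀ (b m : ℕ), (g b).coeff m
      = (Fintype.card Γ : ℂ)⁻¹ * ∑ γ : Γ, (V.character γ *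
          ((∏ i, Nat.gcd (a γ i) b : ℕ) : ℂ)) * (if m = ℓ - k γ then 1 else 0) := by
    intro b m
    rw [hg]
    rw [Polynomial.coeff_C_mul, Polynomial.finset_sum_coeff]
    congr 1
    refine Finset.sum_congr rfl fun γ _ => ?_
    rw [Polynomial.coeff_C_mul, Polynomial.coeff_X_pow]
  have hcℓ : ∀ b : ℕ, (g b).coeff ℓ = V.character 1 / (Fintype.card Γ : ℂ) := by
    intro b
    rw [hcoeff b ℓ]
    rw [Finset.sum_eq_single_of_mem 1 (Finset.mem_univ 1)]
    · have h1 : ℓ - k 1 = ℓ := by rw [k1, Nat.sub_zero]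
      rw [if_pos h1.symm]
      have hprod : (∏ i, Nat.gcd (a 1 i) b) = 1 := by
        haveI : IsEmpty (Fin (k 1)) := by rw [k1]; infer_instance
        simp
      rw [hprod]
      push_cast
      rw [mul_one, mul_one, inv_mul_eq_div]
    · intro γ _ hγ
      rw [if_neg, mul_zero]
      have hpos := hkpos γ hγ
      have hlt : ℓ - k γ < ℓ := Nat.sub_lt (lt_of_lt_of_le hpos (hkle γ)) hpos
      omega
  have hdeg : ∀ b : ℕ, (g b).natDegree = ℓ := by
    intro b
    have hle : (g b).natDegree ≤ ℓ := by
      refine Polynomial.natDegree_le_iff_coeff_eq_zero.mpr fun m hm => ?_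
      rw [hcoeff b m]
      rw [Finset.sum_eq_zero, mul_zero]
      intro γ _
      rw [if_neg, mul_zero]
      have := Nat.sub_le ℓ (k γ)
      omega
    have hge : ℓ ≤ (g b).natDegree :=
      Polynomial.le_natDegree_of_ne_zero
        (by rw [hcℓ b]; exact div_ne_zero hχ1 hcard0)
    omega
  refine ⟨n, hnpos, g, ?_, fun b hb => ⟨hdeg b, hcℓ b⟩⟩
  intro q hq
  rw [hg]
  rw [Polynomial.eval_mul, Polynomial.eval_C, Polynomial.eval_finset_sum]
  congr 1
  refine Finset.sum_congr rfl fun γ _ => ?_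
  rw [Polynomial.eval_mul, Polynomial.eval_C, Polynomial.eval_pow, Polynomial.eval_X]
  rw [map_natCast (starRingEnd ℂ)]
  rw [hfix γ q hq]
  have hpr : (∏ i, Nat.gcd (a γ i) (q % n)) = ∏ i, Nat.gcd (a γ i) q :=
    Finset.prod_congr rfl fun i _ => hgcd γ i q
  rw [hpr]
  push_cast
  ring
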